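/- For any programs P, Q over a finite universe U and alphabets H, B ⊆ U: P ≡_{⟨H,B⟩} Q holds if and only if P and Q have the same set of ⟨H,B⟩-models. -/
import Mathlib


structure Rule (α : Type*) where
  head : Finset α
  pbody : Finset α
  nbody : Finset α
deriving DecidableEq

abbrev Program (α : Type*) := Finset (Rule α)

variable {α : Type*} [DecidableEq α]

/-- An interpretation `Y` satisfies a rule. -/
def satRule (Y : Finset α) (r : Rule α) : Prop :=
  r.pbody ⊆ Y → r.nbody ∩ Y = ∅ → (r.head ∩ Y).Nonempty

/-- `Y` is a model of the program `P`. -/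
def satProg (Y : Finset α) (P : Program α) : Prop := ∀ r ∈ P, satRule Y r

/-- The Gelfond–Lifschitz reduct `P^Y`. -/
def reduct (P : Program α) (Y : Finset α) : Program α :=
  (P.filter (fun r => r.nbody ∩ Y = ∅)).image (fun r => ⟨r.head, r.pbody, ∅⟩)

/-- `Y` is an answer set of `P`: a minimal model of `P^Y`. -/
def isAS (P : Program α) (Y : Finset α) : Prop :=
  satProg Y (reduct P Y) ∧ ∀ Z, Z ⊂ Y → ¬ satProg Z (reduct P Y)

def heads (P : Program α) : Finset α := P.biUnion Rule.head
def bodies (P : Program α) : Finset α := P.biUnion (fun r => r.pbody ∪ r.nbody)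

/-- A positive program: no default negation. -/
def Positive (P : Program α) : Prop := ∀ r ∈ P, r.nbody = ∅

/-- A unary program: only facts `a ←` and rules `a ← b`. -/
def Unary (P : Program α) : Prop :=
  ∀ r ∈ P, r.nbody = ∅ ∧ r.head.card = 1 ∧ r.pbody.card ≤ 1

/-- Membership in the class `C_⟨H,B⟩`. -/
def inClass (H B : Finset α) (P : Program α) : Prop := heads P ⊆ H ∧ bodies P ⊆ B

/-- `V ⪯_H^B Z`. -/
def preceq (H B V Z : Finset α) : Prop := V ∩ H ⊆ Z ∩ H ∧ Z ∩ B ⊆ V ∩ B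

/-- `V ≺_H^B Z`. -/
def prec (H B V Z : Finset α) : Prop := preceq H B V Z ∧ V ∩ (H ∪ B) ≠ Z ∩ (H ∪ B)

/-- `Y` is an `H`-total model of `P`. -/
def Htotal (H : Finset α) (P : Program α) (Y : Finset α) : Prop :=
  satProg Y P ∧ ∀ Z, Z ⊂ Y → satProg Z (reduct P Y) → Z ∩ H ⊂ Y ∩ H

/-- The containment `P ⊆_⟨H,B⟩ Q`. -/
def containsHB (H B : Finset α) (P Q : Program α) : Prop :=
  ∀ R : Program α, inClass H B R → ∀ Y, isAS (P ∪ R) Y → isAS (Q ∪ R) Y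

/-- The equivalence `P ≡_⟨H,B⟩ Q`. -/
def equivHB (H B : Finset α) (P Q : Program α) : Prop :=
  ∀ R : Program α, inClass H B R → ∀ Y, isAS (P ∪ R) Y ↔ isAS (Q ∪ R) Y

/-- A witness against `P ⊆_⟨H,B⟩ Q`. -/
def Witness (H B : Finset α) (P Q : Program α) (X Y : Finset α) : Prop :=
  X ⊆ Y ∧ Htotal H P Y ∧
    (satProg Y Q → X ⊂ Y ∧ satProg X (reduct Q Y) ∧
      ∀ X', preceq H B X X' → X' ⊂ Y → ¬ satProg X' (reduct P Y))

/-- `(X,Y)` is `⪯_H^B`-maximal for `P`. -/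
def maximalHB (H B : Finset α) (P : Program α) (X Y : Finset α) : Prop :=
  satProg X (reduct P Y) ∧ ∀ X', prec H B X X' → X' ⊂ Y → ¬ satProg X' (reduct P Y)

/-- `(X,Y)` is an `⟨H,B⟩`-model of `P`. -/
def HBmodel (H B : Finset α) (P : Program α) (X Y : Finset α) : Prop :=
  X ⊆ Y ∧ Htotal H P Y ∧
    (X ⊂ Y → ∃ X', X' ⊂ Y ∧ X' ∩ (H ∪ B) = X ∧ maximalHB H B P X' Y)


section AuxiliaryLemmas

variable {α : Type*} [DecidableEq α]

lemma satProg_union' {Y : Finset α} {P Q : Program α} :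
    satProg Y (P ∪ Q) ↔ satProg Y P ∧ satProg Y Q := by
  simp [satProg, Finset.mem_union, or_imp, forall_and]

lemma reduct_union' (P Q : Program α) (Y : Finset α) :
    reduct (P ∪ Q) Y = reduct P Y ∪ reduct Q Y := by
  simp [reduct, Finset.filter_union, Finset.image_union]

lemma satProg_reduct_iff {Z Y : Finset α} {P : Program α} :
    satProg Z (reduct P Y) ↔
      ∀ r ∈ P, r.nbody ∩ Y = ∅ → r.pbody ⊆ Z → (r.head ∩ Z).Nonempty := by
  constructor
  · intro h r hr hn hp
    have hmem : (⟨r.head, r.pbody, ∅⟩ : Rule α) ∈ reduct P Y := by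
      simp only [reduct, Finset.mem_image, Finset.mem_filter]
      exact ⟨r, ⟨hr, hn⟩, rfl⟩
    simpa [satRule] using h _ hmem hp (by simp)
  · intro h r hr
    simp only [reduct, Finset.mem_image, Finset.mem_filter] at hr
    obtain ⟨s, ⟨hs, hn⟩, rfl⟩ := hr
    intro hp _
    exact h s hs hn hp

lemma sat_reduct_self {Y : Finset α} {P : Program α} :
    satProg Y (reduct P Y) ↔ satProg Y P := by
  rw [satProg_reduct_iff]
  constructor
  · intro h r hr hp hn; exact h r hr hn hp
  · intro h r hr hn hp; exact h r hr hp hn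

lemma preceq_trans {H B U V W : Finset α}
    (h1 : preceq H B U V) (h2 : preceq H B V W) : preceq H B U W :=
  ⟨h1.1.trans h2.1, h2.2.trans h1.2⟩

lemma preceq_refl (H B V : Finset α) : preceq H B V V :=
  ⟨subset_rfl, subset_rfl⟩

lemma trace_eq_of_parts {H B V W : Finset α}
    (h1 : V ∩ H = W ∩ H) (h2 : V ∩ B = W ∩ B) :
    V ∩ (H ∪ B) = W ∩ (H ∪ B) := by
  rw [Finset.inter_union_distrib_left, Finset.inter_union_distrib_left, h1, h2]

lemma trace_inter_H {H B V : Finset α} : V ∩ (H ∪ B) ∩ H = V ∩ H := by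
  rw [Finset.inter_assoc, Finset.union_inter_cancel_left]

lemma trace_inter_B {H B V : Finset α} : V ∩ (H ∪ B) ∩ B = V ∩ B := by
  rw [Finset.inter_assoc, Finset.union_inter_cancel_right]

/-- Existence of a `⪯`-maximal pair above any countermodel. -/
lemma exists_maximal [Fintype α] (H B : Finset α) (Q : Program α) {Y Z : Finset α}
    (hZY : Z ⊂ Y) (hZ : satProg Z (reduct Q Y)) :
    ∃ X0, preceq H B Z X0 ∧ X0 ⊂ Y ∧ maximalHB H B Q X0 Y := by
  classical
  set S : Finset (Finset α) :=
    Finset.univ.filter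
      (fun V => preceq H B Z V ∧ V ⊂ Y ∧ satProg V (reduct Q Y)) with hS
  have hZS : Z ∈ S := by
    simp only [hS, Finset.mem_filter, Finset.mem_univ, true_and]
    exact ⟨preceq_refl H B Z, hZY, hZ⟩
  obtain ⟨X0, hX0S, hmax⟩ := S.exists_max_image
    (fun V => (V ∩ H).card + ((Y ∩ B) \ V).card) ⟨Z, hZS⟩
  simp only [hS, Finset.mem_filter, Finset.mem_univ, true_and] at hX0S
  obtain ⟨hpre, hX0Y, hX0sat⟩ := hX0S
  refine ⟨X0, hpre, hX0Y, hX0sat, ?_⟩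
  intro X' hprec hX'Y hX'sat
  have hX'S : X' ∈ S := by
    simp only [hS, Finset.mem_filter, Finset.mem_univ, true_and]
    exact ⟨preceq_trans hpre hprec.1, hX'Y, hX'sat⟩
  have hle := hmax X' hX'S
  have h1 : X0 ∩ H ⊆ X' ∩ H := hprec.1.1
  have h2 : X' ∩ B ⊆ X0 ∩ B := hprec.1.2
  have h3 : (Y ∩ B) \ X0 ⊆ (Y ∩ B) \ X' := by
    intro a ha
    simp only [Finset.mem_sdiff] at ha ⊢
    refine ⟨ha.1, fun hmem => ha.2 ?_⟩
    have : a ∈ X' ∩ B := Finset.mem_inter.mpr ⟨hmem, (Finset.mem_inter.mp ha.1).2⟩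
    exact (Finset.mem_inter.mp (h2 this)).1
  have hne : ¬ (X0 ∩ H = X' ∩ H ∧ X0 ∩ B = X' ∩ B) := by
    rintro ⟨e1, e2⟩
    exact hprec.2 (trace_eq_of_parts e1 e2)
  have hlt : (X0 ∩ H).card + ((Y ∩ B) \ X0).card
      < (X' ∩ H).card + ((Y ∩ B) \ X').card := by
    by_cases hH : X0 ∩ H = X' ∩ H
    · have hBne : X0 ∩ B ≠ X' ∩ B := fun e => hne ⟨hH, e⟩
      have hBss : X' ∩ B ⊂ X0 ∩ B := h2.ssubset_of_ne (fun e => hBne e.symm)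
      obtain ⟨a, haX0, haX'⟩ := Finset.exists_of_ssubset hBss
      have haB : a ∈ B := (Finset.mem_inter.mp haX0).2
      have haY : a ∈ Y ∩ B :=
        Finset.mem_inter.mpr ⟨hX0Y.subset (Finset.mem_inter.mp haX0).1, haB⟩
      have hss : (Y ∩ B) \ X0 ⊂ (Y ∩ B) \ X' := by
        refine h3.ssubset_of_ne (fun e => ?_)
        have ha1 : a ∈ (Y ∩ B) \ X' := by
          simp only [Finset.mem_sdiff]
          exact ⟨haY, fun hmem => haX' (Finset.mem_inter.mpr ⟨hmem, haB⟩)⟩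
        rw [← e] at ha1
        exact (Finset.mem_sdiff.mp ha1).2 (Finset.mem_inter.mp haX0).1
      exact Nat.add_lt_add_of_le_of_lt (Finset.card_le_card h1) (Finset.card_lt_card hss)
    · have hHss : X0 ∩ H ⊂ X' ∩ H := h1.ssubset_of_ne hH
      exact Nat.add_lt_add_of_lt_of_le (Finset.card_lt_card hHss) (Finset.card_le_card h3)
  omega

/-- The fact program `{a ← : a ∈ S}`. -/
def facts (S : Finset α) : Program α := S.image (fun a => ⟨{a}, ∅, ∅⟩)

/-- The program `{a ← b : b ∈ S, a ∈ T}`. -/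
def pairRules (S T : Finset α) : Program α :=
  (S ×ˢ T).image (fun p => ⟨{p.2}, {p.1}, ∅⟩)

lemma rule_eta {r : Rule α} (h : r.nbody = ∅) :
    (⟨r.head, r.pbody, ∅⟩ : Rule α) = r := by
  obtain ⟨h1, p1, n1⟩ := r
  simp only at h
  rw [h]

lemma reduct_positive {R : Program α} (h : ∀ r ∈ R, r.nbody = ∅) (Y : Finset α) :
    reduct R Y = R := by
  unfold reduct
  rw [Finset.filter_true_of_mem (fun r hr => by rw [h r hr]; simp)]
  ext r
  simp only [Finset.mem_image]
  constructor
  · rintro ⟨s, hs, rfl⟩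
    rw [rule_eta (h s hs)]
    exact hs
  · intro hr
    exact ⟨r, hr, rule_eta (h r hr)⟩

lemma facts_nbody {S : Finset α} : ∀ r ∈ facts S, r.nbody = ∅ := by
  intro r hr
  simp only [facts, Finset.mem_image] at hr
  obtain ⟨a, _, rfl⟩ := hr
  rfl

lemma pairRules_nbody {S T : Finset α} : ∀ r ∈ pairRules S T, r.nbody = ∅ := by
  intro r hr
  simp only [pairRules, Finset.mem_image] at hr
  obtain ⟨p, _, rfl⟩ := hr
  rfl

lemma sat_facts {Z S : Finset α} : satProg Z (facts S) ↔ S ⊆ Z := by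
  constructor
  · intro h a ha
    have := h ⟨{a}, ∅, ∅⟩ (Finset.mem_image_of_mem _ ha) (by simp [Finset.empty_subset]) (by simp)
    simpa [Finset.singleton_inter_of_mem, Finset.Nonempty] using this
  · intro h r hr
    simp only [facts, Finset.mem_image] at hr
    obtain ⟨a, ha, rfl⟩ := hr
    intro _ _
    exact ⟨a, by simp [h ha]⟩

lemma sat_pairRules {Z S T : Finset α} :
    satProg Z (pairRules S T) ↔ ∀ b ∈ S, b ∈ Z → ∀ a ∈ T, a ∈ Z := by
  constructor
  · intro h b hb hbZ a ha
    have hmem : (⟨{a}, {b}, ∅⟩ : Rule α) ∈ pairRules S T :=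
      Finset.mem_image_of_mem (fun p : α × α => (⟨{p.2}, {p.1}, ∅⟩ : Rule α))
        (Finset.mem_product.mpr (⟨hb, ha⟩ : (b, a).1 ∈ S ∧ (b, a).2 ∈ T))
    have := h _ hmem (by simpa [satRule] using hbZ) (by simp)
    simpa [Finset.Nonempty] using this
  · intro h r hr
    simp only [pairRules, Finset.mem_image] at hr
    obtain ⟨⟨b, a⟩, hba, rfl⟩ := hr
    obtain ⟨hb, ha⟩ := Finset.mem_product.mp hba
    intro hp _
    have hbZ : b ∈ Z := hp (by simp)
    exact ⟨a, by simp [h b hb hbZ a ha]⟩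

lemma inClass_facts {H B S : Finset α} (h : S ⊆ H) : inClass H B (facts S) := by
  constructor
  · intro a ha
    simp only [heads, facts, Finset.mem_biUnion, Finset.mem_image] at ha
    obtain ⟨r, ⟨b, hb, rfl⟩, har⟩ := ha
    simp only [Finset.mem_singleton] at har
    exact h (har ▸ hb)
  · intro a ha
    simp only [bodies, facts, Finset.mem_biUnion, Finset.mem_image] at ha
    obtain ⟨r, ⟨b, hb, rfl⟩, har⟩ := ha
    simp at har

lemma inClass_pairRules {H B S T : Finset α} (hS : S ⊆ B) (hT : T ⊆ H) :
    inClass H B (pairRules S T) := by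
  constructor
  · intro a ha
    simp only [heads, pairRules, Finset.mem_biUnion, Finset.mem_image] at ha
    obtain ⟨r, ⟨p, hp, rfl⟩, har⟩ := ha
    simp only [Finset.mem_singleton] at har
    exact hT (har ▸ (Finset.mem_product.mp hp).2)
  · intro a ha
    simp only [bodies, pairRules, Finset.mem_biUnion, Finset.mem_image] at ha
    obtain ⟨r, ⟨p, hp, rfl⟩, har⟩ := ha
    simp only [Finset.union_empty, Finset.mem_singleton] at har
    exact hS (har ▸ (Finset.mem_product.mp hp).1)

lemma inClass_union {H B : Finset α} {P Q : Program α}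
    (hP : inClass H B P) (hQ : inClass H B Q) : inClass H B (P ∪ Q) := by
  constructor
  · intro a ha
    simp only [heads, Finset.mem_biUnion, Finset.mem_union] at ha
    obtain ⟨r, hr | hr, har⟩ := ha
    · exact hP.1 (Finset.mem_biUnion.mpr ⟨r, hr, har⟩)
    · exact hQ.1 (Finset.mem_biUnion.mpr ⟨r, hr, har⟩)
  · intro a ha
    simp only [bodies, Finset.mem_biUnion, Finset.mem_union] at ha
    obtain ⟨r, hr | hr, har⟩ := ha
    · exact hP.2 (Finset.mem_biUnion.mpr ⟨r, hr, by simpa using har⟩)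
    · exact hQ.2 (Finset.mem_biUnion.mpr ⟨r, hr, by simpa using har⟩)

/-- Transfer satisfaction of a reduct of a program in `C_⟨H,B⟩` along `⪯`-type data. -/
lemma sat_reduct_transfer {H B : Finset α} {R : Program α} (hR : inClass H B R)
    {Y Z W : Finset α} (hZ : satProg Z (reduct R Y))
    (hHsub : Z ∩ H ⊆ W) (hBsub : W ∩ B ⊆ Z) : satProg W (reduct R Y) := by
  rw [satProg_reduct_iff] at hZ ⊢
  intro r hr hn hp
  have hpB : r.pbody ⊆ B := fun a ha =>
    hR.2 (Finset.mem_biUnion.mpr ⟨r, hr, Finset.mem_union_left _ ha⟩)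
  have hpZ : r.pbody ⊆ Z := fun a ha =>
    hBsub (Finset.mem_inter.mpr ⟨hp ha, hpB ha⟩)
  obtain ⟨a, haZ⟩ := hZ r hr hn hpZ
  obtain ⟨hah, haZ'⟩ := Finset.mem_inter.mp haZ
  have haH : a ∈ H := hR.1 (Finset.mem_biUnion.mpr ⟨r, hr, hah⟩)
  exact ⟨a, Finset.mem_inter.mpr ⟨hah, hHsub (Finset.mem_inter.mpr ⟨haZ', haH⟩)⟩⟩

/-- `H`-totality transfers along `⟨H,B⟩`-equivalence. -/
lemma htotal_transfer {H B : Finset α} {P Q : Program α}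
    (heq : equivHB H B P Q) {Y : Finset α} (hP : Htotal H P Y) : Htotal H Q Y := by
  set R0 : Program α := facts (Y ∩ H) with hR0
  have hR0pos : ∀ r ∈ R0, r.nbody = ∅ := facts_nbody
  have hR0red : ∀ W : Finset α, reduct R0 W = R0 := reduct_positive hR0pos
  have hR0class : inClass H B R0 := inClass_facts Finset.inter_subset_right
  have hAS : isAS (P ∪ R0) Y := by
    constructor
    · rw [sat_reduct_self, satProg_union']
      exact ⟨hP.1, sat_facts.mpr Finset.inter_subset_left⟩
    · intro Z hZY hZsat
      rw [reduct_union', satProg_union', hR0red] at hZsat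
      have hss := hP.2 Z hZY hZsat.1
      have hsub : Y ∩ H ⊆ Z ∩ H := fun a ha =>
        Finset.mem_inter.mpr ⟨sat_facts.mp hZsat.2 ha, (Finset.mem_inter.mp ha).2⟩
      exact hss.2 hsub
  have hASQ : isAS (Q ∪ R0) Y := (heq R0 hR0class Y).mp hAS
  have hYQ : satProg Y Q := by
    have := sat_reduct_self.mp hASQ.1
    exact (satProg_union'.mp this).1
  refine ⟨hYQ, fun Z hZY hZsat => ?_⟩
  have hsub : Z ∩ H ⊆ Y ∩ H := Finset.inter_subset_inter hZY.subset Finset.Subset.rfl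
  refine hsub.ssubset_of_ne (fun he => ?_)
  have hZR0 : satProg Z R0 := sat_facts.mpr (fun a ha => (Finset.mem_inter.mp (he ▸ ha : a ∈ Z ∩ H)).1)
  exact hASQ.2 Z hZY (by rw [reduct_union', satProg_union', hR0red]; exact ⟨hZsat, hZR0⟩)

/-- The key induction: maximal pairs with a given trace transfer along equivalence. -/
lemma key_transfer [Fintype α] (H B : Finset α) :
    ∀ n : ℕ, ∀ P Q : Program α, equivHB H B P Q → ∀ Y X X1 : Finset α,
      ((Y ∩ H) \ X).card + (X ∩ B).card ≤ n →
      Htotal H P Y → Htotal H Q Y →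
      X1 ⊂ Y → X1 ∩ (H ∪ B) = X → maximalHB H B P X1 Y →
      ∃ X2, X2 ⊂ Y ∧ X2 ∩ (H ∪ B) = X ∧ maximalHB H B Q X2 Y := by
  intro n
  induction n using Nat.strong_induction_on with
  | _ n IH =>
  intro P Q heq Y X X1 hcard hPt hQt hX1Y hX1tr hX1max
  have hXH : X ∩ H = X1 ∩ H := by rw [← hX1tr, trace_inter_H]
  have hXB : X ∩ B = X1 ∩ B := by rw [← hX1tr, trace_inter_B]
  have hXY : X ⊆ Y := hX1tr ▸ (Finset.inter_subset_left.trans hX1Y.subset)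
  -- the distinguishing program
  set R : Program α := facts (X ∩ H) ∪ pairRules ((Y ∩ B) \ X) (Y ∩ H) with hR
  have hRpos : ∀ r ∈ R, r.nbody = ∅ := by
    intro r hr
    rcases Finset.mem_union.mp hr with h | h
    · exact facts_nbody r h
    · exact pairRules_nbody r h
  have hRred : ∀ W : Finset α, reduct R W = R := reduct_positive hRpos
  have hRclass : inClass H B R :=
    inClass_union (inClass_facts Finset.inter_subset_right)
      (inClass_pairRules (fun a ha => (Finset.mem_inter.mp (Finset.mem_sdiff.mp ha).1).2)
        Finset.inter_subset_right)
  have hsatR : ∀ W : Finset α, satProg W R ↔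
      (X ∩ H ⊆ W ∧ ∀ b ∈ (Y ∩ B) \ X, b ∈ W → Y ∩ H ⊆ W) := by
    intro W
    rw [hR, satProg_union', sat_facts, sat_pairRules]
    constructor
    · rintro ⟨h1, h2⟩
      exact ⟨h1, fun b hb hbW a ha => h2 b hb hbW a ha⟩
    · rintro ⟨h1, h2⟩
      exact ⟨h1, fun b hb hbW a ha => h2 b hb hbW ha⟩
  -- X1 destroys minimality of Y for P ∪ R
  have hX1R : satProg X1 R := by
    rw [hsatR]
    refine ⟨hXH ▸ Finset.inter_subset_left, fun b hb hbX1 => ?_⟩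
    obtain ⟨hbYB, hbX⟩ := Finset.mem_sdiff.mp hb
    have hbXB : b ∈ X ∩ B := hXB ▸ (Finset.mem_inter.mpr ⟨hbX1, (Finset.mem_inter.mp hbYB).2⟩)
    exact absurd hbXB (fun h => hbX (Finset.mem_inter.mp h).1)
  have hnAS : ¬ isAS (P ∪ R) Y := by
    intro hAS
    exact hAS.2 X1 hX1Y (by
      rw [reduct_union', satProg_union', hRred]
      exact ⟨hX1max.1, hX1R⟩)
  have hnASQ : ¬ isAS (Q ∪ R) Y := fun h => hnAS ((heq R hRclass Y).mpr h)
  have hYsat : satProg Y (reduct (Q ∪ R) Y) := by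
    rw [sat_reduct_self, satProg_union']
    refine ⟨hQt.1, (hsatR Y).mpr ⟨(hXH ▸ Finset.inter_subset_left : X ∩ H ⊆ X1).trans hX1Y.subset,
      fun b _ _ => Finset.inter_subset_left⟩⟩
  -- extract a countermodel Z for Q ∪ R
  have hex : ∃ Z, Z ⊂ Y ∧ satProg Z (reduct (Q ∪ R) Y) := by
    by_contra hno
    push_neg at hno
    exact hnASQ ⟨hYsat, fun Z hZ hs => hno Z hZ hs⟩
  obtain ⟨Z, hZY, hZsat⟩ := hex
  rw [reduct_union', satProg_union', hRred] at hZsat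
  obtain ⟨hZQ, hZR⟩ := hZsat
  rw [hsatR] at hZR
  -- Z cannot contain a B-atom of Y outside X
  have hZB : Z ∩ B ⊆ X ∩ B := by
    intro a ha
    obtain ⟨haZ, haB⟩ := Finset.mem_inter.mp ha
    by_contra haX
    have haX' : a ∉ X := fun h => haX (Finset.mem_inter.mpr ⟨h, haB⟩)
    have hYHZ : Y ∩ H ⊆ Z := hZR.2 a
      (Finset.mem_sdiff.mpr ⟨Finset.mem_inter.mpr ⟨hZY.subset haZ, haB⟩, haX'⟩) haZ
    have hss := hQt.2 Z hZY hZQ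
    exact hss.2 (fun x hx => Finset.mem_inter.mpr ⟨hYHZ hx, (Finset.mem_inter.mp hx).2⟩)
  have hpreXZ : preceq H B X Z := by
    refine ⟨fun a ha => ?_, hZB⟩
    exact Finset.mem_inter.mpr ⟨hZR.1 ha, (Finset.mem_inter.mp ha).2⟩
  -- pass to a maximal pair for Q above Z
  obtain ⟨X0, hpre0, hX0Y, hX0max⟩ := exists_maximal H B Q hZY hZQ
  have hpreXX0 : preceq H B X X0 := preceq_trans hpreXZ hpre0
  by_cases htr : X0 ∩ (H ∪ B) = X
  · exact ⟨X0, hX0Y, htr, hX0max⟩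
  · -- recurse at the strictly larger trace T
    set T := X0 ∩ (H ∪ B) with hT
    have hTH : T ∩ H = X0 ∩ H := trace_inter_H
    have hTB : T ∩ B = X0 ∩ B := trace_inter_B
    have hXsub : X ⊆ H ∪ B := hX1tr ▸ Finset.inter_subset_right
    have hsub1 : (Y ∩ H) \ T ⊆ (Y ∩ H) \ X := by
      intro a ha
      obtain ⟨haYH, haT⟩ := Finset.mem_sdiff.mp ha
      refine Finset.mem_sdiff.mpr ⟨haYH, fun haX => haT ?_⟩
      have : a ∈ X0 ∩ H := hpreXX0.1 (Finset.mem_inter.mpr ⟨haX, (Finset.mem_inter.mp haYH).2⟩)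
      exact Finset.mem_inter.mpr ⟨(Finset.mem_inter.mp this).1,
        Finset.mem_union_left _ (Finset.mem_inter.mp this).2⟩
    have hsub2 : T ∩ B ⊆ X ∩ B := hTB ▸ hpreXX0.2
    have hlt : ((Y ∩ H) \ T).card + (T ∩ B).card < ((Y ∩ H) \ X).card + (X ∩ B).card := by
      by_cases hH : T ∩ H = X ∩ H
      · have hBne : T ∩ B ≠ X ∩ B := by
          intro e
          apply htr
          have h' : T ∩ (H ∪ B) = X ∩ (H ∪ B) := trace_eq_of_parts hH e
          rw [Finset.inter_eq_left.mpr (hT ▸ Finset.inter_subset_right : T ⊆ H ∪ B),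
            Finset.inter_eq_left.mpr hXsub] at h'
          exact h'
        have hBss : T ∩ B ⊂ X ∩ B := hsub2.ssubset_of_ne hBne
        exact Nat.add_lt_add_of_le_of_lt (Finset.card_le_card hsub1) (Finset.card_lt_card hBss)
      · have hHss : X ∩ H ⊂ T ∩ H :=
          (hTH ▸ hpreXX0.1 : X ∩ H ⊆ T ∩ H).ssubset_of_ne (fun e => hH e.symm)
        have hss1 : (Y ∩ H) \ T ⊂ (Y ∩ H) \ X := by
          refine hsub1.ssubset_of_ne (fun e => ?_)
          obtain ⟨a, haT, haX⟩ := Finset.exists_of_ssubset hHss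
          obtain ⟨haT', haH⟩ := Finset.mem_inter.mp haT
          have haY : a ∈ Y := hX0Y.subset (Finset.mem_inter.mp haT').1
          have haX' : a ∉ X := fun h => haX (Finset.mem_inter.mpr ⟨h, haH⟩)
          have ha1 : a ∈ (Y ∩ H) \ X := Finset.mem_sdiff.mpr ⟨Finset.mem_inter.mpr ⟨haY, haH⟩, haX'⟩
          rw [← e] at ha1
          exact (Finset.mem_sdiff.mp ha1).2 haT'
        exact Nat.add_lt_add_of_lt_of_le (Finset.card_lt_card hss1) (Finset.card_le_card hsub2)
    have heq' : equivHB H B Q P := fun R hR Y => (heq R hR Y).symm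
    obtain ⟨X2, hX2Y, hX2tr, hX2max⟩ :=
      IH _ (lt_of_lt_of_le hlt hcard) Q P heq' Y T X0 le_rfl hQt hPt hX0Y rfl hX0max
    -- contradiction with maximality of X1 for P
    have hprec12 : prec H B X1 X2 := by
      refine ⟨⟨?_, ?_⟩, ?_⟩
      · calc X1 ∩ H = X ∩ H := hXH.symm
          _ ⊆ X0 ∩ H := hpreXX0.1
          _ = T ∩ H := hTH.symm
          _ = X2 ∩ (H ∪ B) ∩ H := by rw [hX2tr]
          _ = X2 ∩ H := trace_inter_H
      · calc X2 ∩ B = X2 ∩ (H ∪ B) ∩ B := trace_inter_B.symm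
          _ = T ∩ B := by rw [hX2tr]
          _ = X0 ∩ B := hTB
          _ ⊆ X ∩ B := hpreXX0.2
          _ = X1 ∩ B := hXB
      · rw [hX1tr, hX2tr]
        intro e
        exact htr e.symm
    exact absurd hX2max.1 (hX1max.2 X2 hprec12 hX2Y)

/-- Forward direction: equivalence implies inclusion of `⟨H,B⟩`-models. -/
lemma model_mono [Fintype α] {H B : Finset α} {P Q : Program α}
    (heq : equivHB H B P Q) : ∀ X Y, HBmodel H B P X Y → HBmodel H B Q X Y := by
  rintro X Y ⟨hXY, hPt, hmax⟩
  have hQt : Htotal H Q Y := htotal_transfer heq hPt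
  refine ⟨hXY, hQt, fun hXsY => ?_⟩
  obtain ⟨X1, hX1Y, htr, hmax1⟩ := hmax hXsY
  exact key_transfer H B _ P Q heq Y X X1 le_rfl hPt hQt hX1Y htr hmax1

/-- Backward direction: equality of `⟨H,B⟩`-models implies one containment. -/
lemma as_mono [Fintype α] {H B : Finset α} {P Q : Program α}
    (hmod : ∀ X Y, HBmodel H B P X Y ↔ HBmodel H B Q X Y) :
    ∀ R : Program α, inClass H B R → ∀ Y, isAS (P ∪ R) Y → isAS (Q ∪ R) Y := by
  rintro R hRclass Y ⟨hsat, hmin⟩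
  have hYPR : satProg Y P ∧ satProg Y R := satProg_union'.mp (sat_reduct_self.mp hsat)
  have hYredR : satProg Y (reduct R Y) := sat_reduct_self.mpr hYPR.2
  -- Y is H-total for P
  have hPt : Htotal H P Y := by
    refine ⟨hYPR.1, fun Z hZY hZsat => ?_⟩
    have hsub : Z ∩ H ⊆ Y ∩ H := Finset.inter_subset_inter hZY.subset Finset.Subset.rfl
    refine hsub.ssubset_of_ne (fun he => ?_)
    have hYHZ : Y ∩ H ⊆ Z := fun a ha => (Finset.mem_inter.mp (he ▸ ha : a ∈ Z ∩ H)).1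
    have hZR : satProg Z (reduct R Y) :=
      sat_reduct_transfer hRclass hYredR hYHZ (Finset.inter_subset_left.trans hZY.subset)
    exact hmin Z hZY (by rw [reduct_union', satProg_union']; exact ⟨hZsat, hZR⟩)
  -- (Y, Y) is an HB-model of P, hence of Q, so Y is H-total for Q
  have hYY : HBmodel H B Q Y Y :=
    (hmod Y Y).mp ⟨Finset.Subset.rfl, hPt, fun h => absurd h (fun hc => hc.ne rfl)⟩
  have hQt : Htotal H Q Y := hYY.2.1
  refine ⟨by rw [sat_reduct_self, satProg_union']; exact ⟨hQt.1, hYPR.2⟩, ?_⟩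
  intro Z hZY hZsat
  rw [reduct_union', satProg_union'] at hZsat
  obtain ⟨hZQ, hZR⟩ := hZsat
  obtain ⟨X0, hpre0, hX0Y, hX0max⟩ := exists_maximal H B Q hZY hZQ
  set X := X0 ∩ (H ∪ B) with hX
  have hXY : X ⊂ Y := by
    refine (Finset.inter_subset_left.trans hX0Y.subset : X ⊆ Y).ssubset_of_ne (fun e => ?_)
    exact hX0Y.ne (Finset.Subset.antisymm hX0Y.subset (e ▸ Finset.inter_subset_left : Y ⊆ X0))
  have hmodQ : HBmodel H B Q X Y :=
    ⟨hXY.subset, hQt, fun _ => ⟨X0, hX0Y, rfl, hX0max⟩⟩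
  obtain ⟨_, _, hmax⟩ := (hmod X Y).mpr hmodQ
  obtain ⟨X1, hX1Y, hX1tr, hX1max⟩ := hmax hXY
  -- X1 kills minimality of Y for P ∪ R
  have hX1R : satProg X1 (reduct R Y) := by
    refine sat_reduct_transfer hRclass hZR ?_ ?_
    · intro a ha
      have : a ∈ X0 ∩ H := hpre0.1 ha
      have haX : a ∈ X := Finset.mem_inter.mpr ⟨(Finset.mem_inter.mp this).1,
        Finset.mem_union_left _ (Finset.mem_inter.mp this).2⟩
      rw [← hX1tr] at haX
      exact (Finset.mem_inter.mp haX).1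
    · intro a ha
      have h1 : a ∈ X1 ∩ (H ∪ B) ∩ B := by
        rw [Finset.inter_assoc, Finset.union_inter_cancel_right]
        exact ha
      rw [hX1tr, hX, Finset.inter_assoc, Finset.union_inter_cancel_right] at h1
      exact (Finset.mem_inter.mp (hpre0.2 h1)).1
  exact hmin X1 hX1Y (by rw [reduct_union', satProg_union']; exact ⟨hX1max.1, hX1R⟩)

end AuxiliaryLemmas




theorem central_theorem [Fintype α] (P Q : Program α) (H B : Finset α) :
    equivHB H B P Q ↔ ∀ X Y, HBmodel H B P X Y ↔ HBmodel H B Q X Y := by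
  constructor
  · intro heq X Y
    exact ⟨model_mono heq X Y, model_mono (fun R hR Z => (heq R hR Z).symm) X Y⟩
  · intro hmod R hR Y
    exact ⟨as_mono hmod R hR Y, as_mono (fun X Y => (hmod X Y).symm) R hR Y⟩
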